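/- Fix γ ∈ (0,1) and let σ : ℝ → ℝ be the leaky-ReLU σ(t) = t for t > 0 and σ(t) = γt for t ≤ 0. For β > 0 define φ_β : ℝ² → ℝ by φ_β(X) = −σ(X₁) + σ(X₁ + βX₂). Then: (i) for every Borel probability measure μ on ℝ² that is absolutely continuous with respect to Lebesgue measure, lim_{β → 0⁺} ∫ ‖∇φ_β(X)‖² dμ(X) = 0 (the gradient exists μ-almost everywhere); and (ii) for every β > 0, the Lipschitz constant of φ_β satisfies ‖φ_β‖_Lip² ≥ (1−γ)² + β², so ‖φ_β‖_Lip is bounded below by (1−γ) > 0 uniformly in β. Hence, when the layer widths of the network are not nonincreasing, the expected squared gradient norm under μ can vanish while the Lipschitz constant stays bounded away from zero, even though the first-layer weight matrix W_β = [[1,0],[0,1],[1,β]] has full rank and bounded condition number. -/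

import Mathlib

open MeasureTheory Filter
open scoped Topology

noncomputable section

/-- Reinterpret a plain vector `Fin n → ℝ` as a point of Euclidean space (`ℓ²` norm). -/
def toE {n : ℕ} (x : Fin n → ℝ) : EuclideanSpace ℝ (Fin n) := WithLp.toLp 2 x

/-- Leaky-ReLU with leak coefficient `γ`: `σ(t) = t` for `t > 0` and `γt` for `t ≤ 0`. -/
def lrelu (γ t : ℝ) : ℝ := if 0 < t then t else γ * t

/-- The two-layer network `φ_β(X) = −σ(X₁) + σ(X₁ + βX₂) = [−1,0,1]·σ(W_β X)` with
`W_β = [[1,0],[0,1],[1,β]]`, whose hidden width 3 exceeds the input dimension 2. -/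
def phiB (γ β : ℝ) (X : EuclideanSpace ℝ (Fin 2)) : ℝ :=
  -lrelu γ (X 0) + lrelu γ (X 0 + β * X 1)

/-- The Lipschitz constant `‖f‖_Lip = sup_{x ≠ y} |f x − f y|/‖x − y‖`. -/
def lipConst {E : Type*} [NormedAddCommGroup E] (f : E → ℝ) : ℝ :=
  sSup {r : ℝ | ∃ x y : E, x ≠ y ∧ r = |f x - f y| / ‖x - y‖}

/-- The (Euclidean) operator norm `σ_max(W) = sup_{x ≠ 0} ‖Wx‖/‖x‖`. -/
def opNorm {m n : ℕ} (W : Matrix (Fin m) (Fin n) ℝ) : ℝ :=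
  sSup {r : ℝ | ∃ x : EuclideanSpace ℝ (Fin n), x ≠ 0 ∧ r = ‖toE (W.mulVec x)‖ / ‖x‖}

/-- Smallest singular value of a tall matrix `C : ℝ^{a×b}` (`a ≥ b`):
`σ_min(C) = inf_{x ≠ 0} ‖Cx‖/‖x‖`. -/
def sigmaMin {a b : ℕ} (C : Matrix (Fin a) (Fin b) ℝ) : ℝ :=
  sInf {r : ℝ | ∃ x : EuclideanSpace ℝ (Fin b), x ≠ 0 ∧ r = ‖toE (C.mulVec x)‖ / ‖x‖}


section Aux

lemma lrelu_lip {γ : ℝ} (h0 : 0 ≤ γ) (h1 : γ ≤ 1) : LipschitzWith 1 (lrelu γ) := by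
  apply LipschitzWith.of_dist_le_mul
  intro a b
  simp only [Real.dist_eq, one_mul, lrelu]
  rcases lt_or_ge 0 a with ha | ha <;> rcases lt_or_ge 0 b with hb | hb <;>
    simp [ha, hb, not_lt.2, abs_le] <;> constructor <;> cases abs_cases (a-b) <;> nlinarith

lemma lrelu_hasDerivAt {γ t : ℝ} (ht : t ≠ 0) :
    HasDerivAt (lrelu γ) (if 0 < t then 1 else γ) t := by
  rcases ht.lt_or_gt with h | h
  · rw [if_neg (not_lt.2 h.le)]
    have : HasDerivAt (fun s : ℝ => γ * s) γ t := by
      simpa using (hasDerivAt_id t).const_mul γ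
    apply this.congr_of_eventuallyEq
    filter_upwards [Iio_mem_nhds h] with s hs
    simp [lrelu, not_lt.2 (le_of_lt (Set.mem_Iio.1 hs))]
  · rw [if_pos h]
    apply (hasDerivAt_id t).congr_of_eventuallyEq
    filter_upwards [Ioi_mem_nhds h] with s hs
    simp [lrelu, Set.mem_Ioi.1 hs]

lemma norm_sq2 (x : EuclideanSpace ℝ (Fin 2)) : ‖x‖ ^ 2 = x 0 ^ 2 + x 1 ^ 2 := by
  rw [EuclideanSpace.norm_eq, Real.sq_sqrt (by positivity)]
  simp [Fin.sum_univ_two, sq_abs]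

lemma norm_sq3 (x : EuclideanSpace ℝ (Fin 3)) : ‖x‖ ^ 2 = x 0 ^ 2 + x 1 ^ 2 + x 2 ^ 2 := by
  rw [EuclideanSpace.norm_eq, Real.sq_sqrt (by positivity)]
  simp [Fin.sum_univ_three, sq_abs]

lemma abs_coord {n : ℕ} (x : EuclideanSpace ℝ (Fin n)) (i : Fin n) : |x i| ≤ ‖x‖ := by
  rw [EuclideanSpace.norm_eq]
  calc |x i| = Real.sqrt (‖x i‖ ^ 2) := by
        rw [Real.norm_eq_abs, Real.sqrt_sq (abs_nonneg _)]
    _ ≤ _ := Real.sqrt_le_sqrt (Finset.single_le_sum (f := fun j => ‖x j‖ ^ 2)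
        (fun j _ => by positivity) (Finset.mem_univ i))

lemma norm_proj2_le (i : Fin 2) :
    ‖(EuclideanSpace.proj i : EuclideanSpace ℝ (Fin 2) →L[ℝ] ℝ)‖ ≤ 1 := by
  refine ContinuousLinearMap.opNorm_le_bound _ zero_le_one fun x => ?_
  simpa using abs_coord x i

lemma norm_gradient_eq (f : EuclideanSpace ℝ (Fin 2) → ℝ) (x : EuclideanSpace ℝ (Fin 2)) :
    ‖gradient f x‖ = ‖fderiv ℝ f x‖ := by
  unfold gradient
  exact LinearIsometryEquiv.norm_map _ _

lemma phiB_hasFDerivAt {γ β : ℝ} {X : EuclideanSpace ℝ (Fin 2)}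
    (h0 : X 0 ≠ 0) (h1 : X 0 + β * X 1 ≠ 0) :
    HasFDerivAt (phiB γ β)
      (-((if 0 < X 0 then (1:ℝ) else γ) • (EuclideanSpace.proj (0 : Fin 2) : EuclideanSpace ℝ (Fin 2) →L[ℝ] ℝ)) +
        (if 0 < X 0 + β * X 1 then (1:ℝ) else γ) •
          ((EuclideanSpace.proj (0 : Fin 2) : EuclideanSpace ℝ (Fin 2) →L[ℝ] ℝ) +
            β • (EuclideanSpace.proj (1 : Fin 2) : EuclideanSpace ℝ (Fin 2) →L[ℝ] ℝ))) X := by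
  set p0 : EuclideanSpace ℝ (Fin 2) →L[ℝ] ℝ := EuclideanSpace.proj (0 : Fin 2)
  set p1 : EuclideanSpace ℝ (Fin 2) →L[ℝ] ℝ := EuclideanSpace.proj (1 : Fin 2)
  have hL : HasFDerivAt (fun Y : EuclideanSpace ℝ (Fin 2) => Y 0 + β * Y 1) (p0 + β • p1) X :=
    (p0 + β • p1).hasFDerivAt
  have hA : HasFDerivAt (fun Y : EuclideanSpace ℝ (Fin 2) => lrelu γ (Y 0))
      ((if 0 < X 0 then (1:ℝ) else γ) • p0) X :=
    by have := (lrelu_hasDerivAt (γ := γ) h0).comp_hasFDerivAt X p0.hasFDerivAt; exact this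
  have hB : HasFDerivAt (fun Y : EuclideanSpace ℝ (Fin 2) => lrelu γ (Y 0 + β * Y 1))
      ((if 0 < X 0 + β * X 1 then (1:ℝ) else γ) • (p0 + β • p1)) X :=
    by have := (lrelu_hasDerivAt (γ := γ) h1).comp_hasFDerivAt X hL; exact this
  exact hA.neg.add hB

lemma phiB_fderiv_small {γ β : ℝ} (hγ0 : 0 < γ) (hγ1 : γ < 1) (hβ : 0 < β)
    {X : EuclideanSpace ℝ (Fin 2)} (hX : X 0 ≠ 0) (hβs : β * |X 1| < |X 0|) :
    ‖fderiv ℝ (phiB γ β) X‖ ≤ β := by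
  have key : (0 < X 0 ∧ 0 < X 0 + β * X 1) ∨ (X 0 < 0 ∧ X 0 + β * X 1 < 0) := by
    rcases hX.lt_or_gt with h | h
    · right; refine ⟨h, ?_⟩
      rw [abs_of_neg h] at hβs
      nlinarith [le_abs_self (X 1)]
    · left; refine ⟨h, ?_⟩
      rw [abs_of_pos h] at hβs
      nlinarith [neg_abs_le (X 1)]
  have h1 : X 0 + β * X 1 ≠ 0 := by
    rcases key with ⟨_, h'⟩ | ⟨_, h'⟩; exacts [ne_of_gt h', ne_of_lt h']
  have hif : (if 0 < X 0 + β * X 1 then (1:ℝ) else γ) = (if 0 < X 0 then (1:ℝ) else γ) := by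
    rcases key with ⟨h, h'⟩ | ⟨h, h'⟩ <;>
      simp [h, h', not_lt.2 h.le, not_lt.2 h'.le]
  have hF := phiB_hasFDerivAt (γ := γ) hX h1
  rw [hif] at hF
  set p1 : EuclideanSpace ℝ (Fin 2) →L[ℝ] ℝ := EuclideanSpace.proj (1 : Fin 2) with hp1
  set d := if 0 < X 0 then (1:ℝ) else γ with hd
  have hd0 : 0 ≤ d := by rw [hd]; split <;> linarith
  have hd1 : d ≤ 1 := by rw [hd]; split <;> linarith
  have hℓ : (-(d • (EuclideanSpace.proj (0 : Fin 2) : EuclideanSpace ℝ (Fin 2) →L[ℝ] ℝ)) +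
      d • ((EuclideanSpace.proj (0 : Fin 2) : EuclideanSpace ℝ (Fin 2) →L[ℝ] ℝ) + β • p1))
      = (d * β) • p1 := by
    ext v
    simp [ContinuousLinearMap.smul_apply, smul_eq_mul]
    ring
  rw [hF.fderiv, hℓ, norm_smul]
  have : ‖d * β‖ ≤ β := by
    rw [Real.norm_eq_abs, abs_of_nonneg (by positivity)]
    nlinarith
  calc ‖d * β‖ * ‖p1‖ ≤ β * 1 := by
        exact mul_le_mul this (norm_proj2_le 1) (norm_nonneg _) hβ.le
    _ = β := mul_one β

lemma phiB_lipschitz_real {γ β : ℝ} (h0 : 0 ≤ γ) (h1 : γ ≤ 1) (hβ : 0 ≤ β)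
    (x y : EuclideanSpace ℝ (Fin 2)) :
    |phiB γ β x - phiB γ β y| ≤ (2 + β) * ‖x - y‖ := by
  set p0 : EuclideanSpace ℝ (Fin 2) →L[ℝ] ℝ := EuclideanSpace.proj (0 : Fin 2)
  set p1 : EuclideanSpace ℝ (Fin 2) →L[ℝ] ℝ := EuclideanSpace.proj (1 : Fin 2)
  have hL := lrelu_lip h0 h1
  have e1 : |lrelu γ (x 0) - lrelu γ (y 0)| ≤ ‖x - y‖ := by
    have := hL.dist_le_mul (x 0) (y 0)
    rw [Real.dist_eq] at this
    have h2 : |x 0 - y 0| ≤ ‖x - y‖ := by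
      calc |x 0 - y 0| = ‖p0 (x - y)‖ := by simp [p0]
        _ ≤ ‖p0‖ * ‖x - y‖ := p0.le_opNorm _
        _ ≤ 1 * ‖x - y‖ := by
            exact mul_le_mul_of_nonneg_right (norm_proj2_le 0) (norm_nonneg _)
        _ = ‖x - y‖ := one_mul _
    calc |lrelu γ (x 0) - lrelu γ (y 0)| ≤ 1 * |x 0 - y 0| := this
      _ ≤ ‖x - y‖ := by linarith
  have e2 : |lrelu γ (x 0 + β * x 1) - lrelu γ (y 0 + β * y 1)| ≤ (1 + β) * ‖x - y‖ := by
    have h3 := hL.dist_le_mul (x 0 + β * x 1) (y 0 + β * y 1)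
    rw [Real.dist_eq] at h3
    have h2 : |(x 0 + β * x 1) - (y 0 + β * y 1)| ≤ (1 + β) * ‖x - y‖ := by
      calc |(x 0 + β * x 1) - (y 0 + β * y 1)| = ‖(p0 + β • p1) (x - y)‖ := by
            simp [p0, p1, Real.norm_eq_abs]
            ring_nf
        _ ≤ ‖p0 + β • p1‖ * ‖x - y‖ := ContinuousLinearMap.le_opNorm _ _
        _ ≤ (1 + β) * ‖x - y‖ := by
            refine mul_le_mul_of_nonneg_right ?_ (norm_nonneg _)
            calc ‖p0 + β • p1‖ ≤ ‖p0‖ + ‖β • p1‖ := norm_add_le _ _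
              _ ≤ 1 + β := by
                  have hs : ‖β • p1‖ = |β| * ‖p1‖ := by
                    rw [show |β| = ‖β‖ from rfl]
                    exact norm_smul β p1
                  rw [hs, abs_of_nonneg hβ]
                  nlinarith [norm_nonneg p1, norm_proj2_le 0, norm_proj2_le 1]
    calc |lrelu γ (x 0 + β * x 1) - lrelu γ (y 0 + β * y 1)|
        ≤ 1 * |(x 0 + β * x 1) - (y 0 + β * y 1)| := h3
      _ ≤ (1 + β) * ‖x - y‖ := by linarith
  have : |phiB γ β x - phiB γ β y| ≤ |lrelu γ (x 0) - lrelu γ (y 0)| +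
      |lrelu γ (x 0 + β * x 1) - lrelu γ (y 0 + β * y 1)| := by
    unfold phiB
    cases abs_cases (lrelu γ (x 0) - lrelu γ (y 0)) <;>
      cases abs_cases (lrelu γ (x 0 + β * x 1) - lrelu γ (y 0 + β * y 1)) <;>
      cases abs_cases (-lrelu γ (x 0) + lrelu γ (x 0 + β * x 1) -
        (-lrelu γ (y 0) + lrelu γ (y 0 + β * y 1))) <;> linarith
  linarith

lemma phiB_fderiv_global {γ β : ℝ} (h0 : 0 ≤ γ) (h1 : γ ≤ 1) (hβ0 : 0 ≤ β) (hβ1 : β ≤ 1)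
    (X : EuclideanSpace ℝ (Fin 2)) : ‖fderiv ℝ (phiB γ β) X‖ ≤ 3 := by
  have hl : LipschitzWith 3 (phiB γ β) := by
    apply LipschitzWith.of_dist_le_mul
    intro x y
    rw [Real.dist_eq, dist_eq_norm]
    have := phiB_lipschitz_real h0 h1 hβ0 x y
    push_cast
    nlinarith [norm_nonneg (x - y)]
  simpa using norm_fderiv_le_of_lipschitz ℝ hl

lemma tendsto_pointwise {γ : ℝ} (hγ0 : 0 < γ) (hγ1 : γ < 1)
    {X : EuclideanSpace ℝ (Fin 2)} (hX : X 0 ≠ 0) :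
    Tendsto (fun β : ℝ => ‖gradient (phiB γ β) X‖ ^ 2) (𝓝[>] (0:ℝ)) (𝓝 0) := by
  have hβ2 : Tendsto (fun β : ℝ => β ^ 2) (𝓝[>] (0:ℝ)) (𝓝 0) := by
    have h : Tendsto (fun β : ℝ => β ^ 2) (𝓝 (0:ℝ)) (𝓝 0) := by
      simpa using (continuous_pow 2).tendsto (0:ℝ)
    exact h.mono_left nhdsWithin_le_nhds
  refine squeeze_zero' ?_ ?_ hβ2
  · filter_upwards with β using by positivity
  · have hδ : 0 < |X 0| / (|X 1| + 1) := by positivity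
    filter_upwards [Ioo_mem_nhdsGT hδ] with β hβ
    obtain ⟨hβ0, hβδ⟩ := hβ
    have hβs : β * |X 1| < |X 0| := by
      rw [lt_div_iff₀ (by positivity)] at hβδ
      nlinarith [abs_nonneg (X 1)]
    rw [norm_gradient_eq]
    exact pow_le_pow_left₀ (norm_nonneg _) (phiB_fderiv_small hγ0 hγ1 hβ0 hX hβs) 2

lemma ae_ne_zero (μ : Measure (EuclideanSpace ℝ (Fin 2))) (hac : μ ≪ volume) :
    ∀ᵐ X ∂μ, X 0 ≠ 0 := by
  have hset : {X : EuclideanSpace ℝ (Fin 2) | X 0 = 0} =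
      (LinearMap.ker ((EuclideanSpace.proj (0 : Fin 2) :
        EuclideanSpace ℝ (Fin 2) →L[ℝ] ℝ) : EuclideanSpace ℝ (Fin 2) →ₗ[ℝ] ℝ) : Set _) := by
    ext x
    simp [LinearMap.mem_ker]
  have hv : volume {X : EuclideanSpace ℝ (Fin 2) | X 0 = 0} = 0 := by
    rw [hset]
    apply Measure.addHaar_submodule
    intro htop
    have h1 : (EuclideanSpace.single (0 : Fin 2) (1:ℝ)) ∈
        (⊤ : Submodule ℝ (EuclideanSpace ℝ (Fin 2))) := trivial
    rw [← htop, LinearMap.mem_ker] at h1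
    simp [EuclideanSpace.single_apply] at h1
  have := hac hv
  rw [ae_iff]
  simpa using this

lemma part1 {γ : ℝ} (hγ0 : 0 < γ) (hγ1 : γ < 1)
    (μ : Measure (EuclideanSpace ℝ (Fin 2))) (hp : IsProbabilityMeasure μ) (hac : μ ≪ volume) :
    Tendsto (fun β : ℝ => ∫ X, ‖gradient (phiB γ β) X‖ ^ 2 ∂μ) (𝓝[>] (0:ℝ)) (𝓝 0) := by
  have key : Tendsto (fun β : ℝ => ∫ X, ‖gradient (phiB γ β) X‖ ^ 2 ∂μ) (𝓝[>] (0:ℝ))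
      (𝓝 (∫ _ : EuclideanSpace ℝ (Fin 2), (0:ℝ) ∂μ)) := by
    apply tendsto_integral_filter_of_dominated_convergence (fun _ => (9 : ℝ))
    · filter_upwards with β
      have hm : Measurable fun X : EuclideanSpace ℝ (Fin 2) => gradient (phiB γ β) X := by
        have h1 : Measurable fun X => fderiv ℝ (phiB γ β) X := measurable_fderiv ℝ _
        exact ((InnerProductSpace.toDual ℝ
          (EuclideanSpace ℝ (Fin 2))).symm.continuous.measurable).comp h1
      exact ((hm.norm).pow_const 2).aestronglyMeasurable
    · filter_upwards [Ioo_mem_nhdsGT (zero_lt_one : (0:ℝ) < 1)] with β hβ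
      filter_upwards with X
      rw [Real.norm_eq_abs, abs_of_nonneg (by positivity)]
      have := phiB_fderiv_global hγ0.le hγ1.le hβ.1.le hβ.2.le X
      rw [norm_gradient_eq]
      nlinarith [norm_nonneg (fderiv ℝ (phiB γ β) X)]
    · exact integrable_const 9
    · filter_upwards [ae_ne_zero μ hac] with X hX
      exact tendsto_pointwise hγ0 hγ1 hX
  simpa using key

set_option maxHeartbeats 1000000 in
lemma lip_lower {γ β : ℝ} (hγ0 : 0 < γ) (hγ1 : γ < 1) (hβ : 0 < β) :
    (1-γ)^2 + β^2 ≤ (lipConst (phiB γ β))^2 ∧ 0 ≤ lipConst (phiB γ β) := by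
  set K : ℝ := (1-γ)^2 + β^2 with hK
  have hKpos : 0 < K := by positivity
  set ε : ℝ := 1/(2*(1+β^2)) with hε
  have hεpos : 0 < ε := by positivity
  have hεsmall : ε * (1+β^2) = 1/2 := by
    rw [hε, div_mul_eq_mul_div, one_mul, div_eq_div_iff (by positivity) (by norm_num)]
    ring
  set S : Set ℝ := {r : ℝ | ∃ x y : EuclideanSpace ℝ (Fin 2), x ≠ y ∧
    r = |phiB γ β x - phiB γ β y| / ‖x - y‖} with hS
  have hbdd : BddAbove S := by
    refine ⟨2 + β, fun r hr => ?_⟩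
    obtain ⟨x, y, hxy, rfl⟩ := hr
    have hpos : 0 < ‖x - y‖ := by
      rw [norm_pos_iff]
      exact sub_ne_zero.mpr hxy
    rw [div_le_iff₀ hpos]
    exact phiB_lipschitz_real hγ0.le hγ1.le hβ.le x y
  set x : EuclideanSpace ℝ (Fin 2) := toE ![-1 + ε*(1-γ), 2/β + ε*β] with hx
  set y : EuclideanSpace ℝ (Fin 2) := toE ![-1 - ε*(1-γ), 2/β - ε*β] with hy
  have hx0 : x 0 = -1 + ε*(1-γ) := rfl
  have hx1 : x 1 = 2/β + ε*β := rfl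
  have hy0 : y 0 = -1 - ε*(1-γ) := rfl
  have hy1 : y 1 = 2/β - ε*β := rfl
  have hεγ : ε * (1-γ) < 1 := by nlinarith
  have hεK : ε * ((1-γ) + β^2) ≤ 1/2 := by nlinarith
  have hvx : phiB γ β x = -γ * (-1 + ε*(1-γ)) + (1 + ε*((1-γ)+β^2)) := by
    have e1 : x 0 + β * x 1 = 1 + ε*((1-γ)+β^2) := by
      rw [hx0, hx1]
      field_simp
      ring
    unfold phiB
    rw [e1, hx0, lrelu, lrelu, if_neg (by nlinarith), if_pos (by nlinarith)]
    ring
  have hvy : phiB γ β y = -γ * (-1 - ε*(1-γ)) + (1 - ε*((1-γ)+β^2)) := by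
    have e1 : y 0 + β * y 1 = 1 - ε*((1-γ)+β^2) := by
      rw [hy0, hy1]
      field_simp
      ring
    unfold phiB
    rw [e1, hy0, lrelu, lrelu, if_neg (by nlinarith), if_pos (by nlinarith)]
    ring
  have hdiff : phiB γ β x - phiB γ β y = 2*ε*K := by
    rw [hvx, hvy, hK]
    ring
  have hsub0 : (x - y) 0 = 2*ε*(1-γ) := by
    have : (x - y) 0 = x 0 - y 0 := rfl
    rw [this, hx0, hy0]; ring
  have hsub1 : (x - y) 1 = 2*ε*β := by
    have : (x - y) 1 = x 1 - y 1 := rfl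
    rw [this, hx1, hy1]; ring
  have hnsq : ‖x - y‖^2 = 4*ε^2*K := by
    rw [norm_sq2, hsub0, hsub1, hK]
    ring
  have hxy : x ≠ y := by
    intro h
    have : x 0 = y 0 := by rw [h]
    rw [hx0, hy0] at this
    nlinarith
  set r : ℝ := |phiB γ β x - phiB γ β y| / ‖x - y‖ with hr
  have hrS : r ∈ S := ⟨x, y, hxy, rfl⟩
  have hr0 : 0 ≤ r := div_nonneg (abs_nonneg _) (norm_nonneg _)
  have hrsq : r^2 = K := by
    rw [hr, div_pow, sq_abs, hdiff, hnsq]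
    field_simp
    ring
  have hrle : r ≤ lipConst (phiB γ β) := le_csSup hbdd hrS
  refine ⟨?_, hr0.trans hrle⟩
  calc K = r^2 := hrsq.symm
    _ ≤ (lipConst (phiB γ β))^2 := by nlinarith

lemma mulVec_apply (β : ℝ) (x : Fin 2 → ℝ) :
    (!![(1:ℝ), 0; 0, 1; 1, β]).mulVec x = ![x 0, x 1, x 0 + β * x 1] := by
  funext i
  fin_cases i <;>
    simp [Matrix.mulVec, dotProduct, Fin.sum_univ_two]

lemma rank_two (β : ℝ) : (!![(1:ℝ), 0; 0, 1; 1, β] : Matrix (Fin 3) (Fin 2) ℝ).rank = 2 := by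
  have hinj : Function.Injective (!![(1:ℝ), 0; 0, 1; 1, β]).mulVecLin := by
    intro u v h
    rw [Matrix.mulVecLin_apply, Matrix.mulVecLin_apply] at h
    have e0 := congrFun h 0
    have e1 := congrFun h 1
    rw [mulVec_apply, mulVec_apply] at e0 e1
    simp at e0 e1
    funext i
    fin_cases i <;> assumption
  unfold Matrix.rank
  rw [LinearMap.finrank_range_of_inj hinj]
  simp

lemma condition_bound {β : ℝ} (hβ0 : 0 < β) (hβ1 : β ≤ 1) :
    opNorm (!![(1:ℝ), 0; 0, 1; 1, β] : Matrix (Fin 3) (Fin 2) ℝ) /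
      sigmaMin (!![(1:ℝ), 0; 0, 1; 1, β] : Matrix (Fin 3) (Fin 2) ℝ) ≤ 3 := by
  set W : Matrix (Fin 3) (Fin 2) ℝ := !![(1:ℝ), 0; 0, 1; 1, β] with hW
  have hx2 : ∀ x : EuclideanSpace ℝ (Fin 2), x ≠ 0 →
      ‖toE (W.mulVec x)‖ / ‖x‖ ≤ 2 ∧ 1 ≤ ‖toE (W.mulVec x)‖ / ‖x‖ := by
    intro x hx
    have hxpos : 0 < ‖x‖ := norm_pos_iff.mpr hx
    have h0 : toE (W.mulVec x) 0 = x 0 := by rw [hW, mulVec_apply]; rfl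
    have h1 : toE (W.mulVec x) 1 = x 1 := by rw [hW, mulVec_apply]; rfl
    have h2 : toE (W.mulVec x) 2 = x 0 + β * x 1 := by rw [hW, mulVec_apply]; rfl
    have hnsq : ‖toE (W.mulVec x)‖ ^ 2 = x 0 ^2 + x 1 ^2 + (x 0 + β * x 1)^2 := by
      rw [norm_sq3, h0, h1, h2]
    have hxsq := norm_sq2 x
    have hb2 : β^2 ≤ 1 := by nlinarith
    have hWle : ‖toE (W.mulVec x)‖^2 ≤ 4 * ‖x‖^2 := by
      nlinarith [sq_nonneg (x 0 - β * x 1), mul_nonneg (sub_nonneg.2 hb2) (sq_nonneg (x 1)),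
        sq_nonneg (x 1)]
    constructor
    · rw [div_le_iff₀ hxpos]
      nlinarith [norm_nonneg (toE (W.mulVec x)), norm_nonneg x, hWle, hxpos,
        sq_nonneg (‖toE (W.mulVec x)‖ - 2 * ‖x‖)]
    · rw [le_div_iff₀ hxpos]
      nlinarith [norm_nonneg (toE (W.mulVec x)), norm_nonneg x, sq_nonneg (x 0 + β * x 1)]
  set S : Set ℝ := {r : ℝ | ∃ x : EuclideanSpace ℝ (Fin 2), x ≠ 0 ∧
    r = ‖toE (W.mulVec x)‖ / ‖x‖} with hS
  have hne : S.Nonempty := by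
    refine ⟨‖toE (W.mulVec (toE ![1, 0]))‖ / ‖toE ![(1:ℝ), 0]‖, toE ![1, 0], ?_, rfl⟩
    intro h
    have := congrArg (fun v : EuclideanSpace ℝ (Fin 2) => v 0) h
    simp [toE] at this
  have hop_le : opNorm W ≤ 2 := csSup_le hne (by rintro r ⟨x, hx, rfl⟩; exact (hx2 x hx).1)
  have hop_nonneg : 0 ≤ opNorm W := by
    obtain ⟨r, hr⟩ := hne
    have hb : BddAbove S := ⟨2, by rintro s ⟨x, hx, rfl⟩; exact (hx2 x hx).1⟩
    have : r ≤ opNorm W := le_csSup hb hr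
    obtain ⟨x, hx, rfl⟩ := hr
    exact le_trans (div_nonneg (norm_nonneg _) (norm_nonneg _)) this
  have hsig : 1 ≤ sigmaMin W :=
    le_csInf hne (by rintro r ⟨x, hx, rfl⟩; exact (hx2 x hx).2)
  calc opNorm W / sigmaMin W ≤ opNorm W := div_le_self hop_nonneg hsig
    _ ≤ 3 := by linarith

end Aux

/-- For the network `φ_β` above, whose layer widths are not
nonincreasing: (i) for every absolutely continuous probability measure `μ` on `ℝ²`, the
expected squared gradient norm `∫ ‖∇φ_β‖² dμ` tends to `0` as `β → 0⁺`; yet (ii)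
`‖φ_β‖²_Lip ≥ (1−γ)² + β²`, so (iii) `‖φ_β‖_Lip ≥ 1−γ > 0` uniformly in `β` — even
though (iv) the first-layer matrix `W_β` has full rank 2 and (v) uniformly bounded
condition number for `β ∈ (0,1]`. -/
theorem expected_gradient_fails_without_nonincreasing_widths
    (γ : ℝ) (hγ : γ ∈ Set.Ioo (0 : ℝ) 1) :
    (∀ μ : Measure (EuclideanSpace ℝ (Fin 2)), IsProbabilityMeasure μ → μ ≪ volume →
      Tendsto (fun β : ℝ => ∫ X, ‖gradient (phiB γ β) X‖ ^ 2 ∂μ)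
        (𝓝[>] (0 : ℝ)) (𝓝 0)) ∧
    (∀ β : ℝ, 0 < β → (1 - γ) ^ 2 + β ^ 2 ≤ (lipConst (phiB γ β)) ^ 2) ∧
    (∀ β : ℝ, 0 < β → 1 - γ ≤ lipConst (phiB γ β)) ∧
    (∀ β : ℝ, (!![(1:ℝ), 0; 0, 1; 1, β] : Matrix (Fin 3) (Fin 2) ℝ).rank = 2) ∧
    (∃ C : ℝ, ∀ β : ℝ, 0 < β → β ≤ 1 →
      opNorm (!![(1:ℝ), 0; 0, 1; 1, β] : Matrix (Fin 3) (Fin 2) ℝ) /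
        sigmaMin (!![(1:ℝ), 0; 0, 1; 1, β] : Matrix (Fin 3) (Fin 2) ℝ) ≤ C) := by
  obtain ⟨hγ0, hγ1⟩ := hγ
  refine ⟨fun μ hp hac => part1 hγ0 hγ1 μ hp hac, fun β hβ => (lip_lower hγ0 hγ1 hβ).1,
    fun β hβ => ?_, fun β => rank_two β, ⟨3, fun β hβ0 hβ1 => condition_bound hβ0 hβ1⟩⟩
  obtain ⟨h1, h2⟩ := lip_lower hγ0 hγ1 hβ
  nlinarith [sq_nonneg β]

end
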